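/- Let L be a finite distributive strong upper semilattice. For all x, y, w, t ∈ L, if IsGLB {x, y} w then IsGLB {x ⊔ t, y ⊔ t} (w ⊔ t). (This is the computation showing that the subgroup M(L) of relations is an ideal of the ring ℤ^L under the multiplication induced by join.) -/
import Mathlib


/-- A strong upper semilattice: any two elements with a common lower bound
have a greatest lower bound. -/
def StrongUpper (L : Type*) [SemilatticeSup L] : Prop :=
  ∀ x y : L, (∃ z, z ≤ x ∧ z ≤ y) → ∃ w, IsGLB {x, y} w

/-- Every interval is a distributive lattice. -/
def IntervalDistrib (L : Type*) [SemilatticeSup L] : Prop :=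
  ∀ a x y z w w' : L, a ≤ x → a ≤ y → a ≤ z →
    IsGLB {x, y} w → IsGLB {x ⊔ z, y ⊔ z} w' → w' = w ⊔ z

/-- Meet-irreducible element. -/
def MeetIrred {L : Type*} [SemilatticeSup L] [OrderTop L] (m : L) : Prop :=
  m ≠ ⊤ ∧ ∀ p q : L, IsGLB {p, q} m → m = p ∨ m = q

/-- Meet-irreducibles are meet-prime. -/
lemma meetIrred_prime {L : Type*} [SemilatticeSup L] [OrderTop L]
    (hS : StrongUpper L) (hD : IntervalDistrib L)
    {x y w m : L} (hw : IsGLB {x, y} w) (hm : MeetIrred m) (hwm : w ≤ m) :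
    x ≤ m ∨ y ≤ m := by
  obtain ⟨w'', hw''⟩ := hS (x ⊔ m) (y ⊔ m) ⟨m, le_sup_right, le_sup_right⟩
  have hx : w ≤ x := hw.1 (by simp)
  have hy : w ≤ y := hw.1 (by simp)
  have h : w'' = w ⊔ m := hD w x y m w w'' hx hy hwm hw hw''
  rw [h, sup_eq_right.mpr hwm] at hw''
  rcases hm.2 _ _ hw'' with h' | h'
  · exact Or.inl (sup_eq_right.mp h'.symm)
  · exact Or.inr (sup_eq_right.mp h'.symm)

/-- Every element is the GLB of the meet-irreducibles above it. -/
lemma isGLB_meetIrred {L : Type*} [SemilatticeSup L] [OrderTop L] [Finite L]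
    (c : L) : IsGLB {m | MeetIrred m ∧ c ≤ m} c := by
  induction c using WellFoundedGT.induction with
  | _ c IH =>
    constructor
    · intro m hm; exact hm.2
    · intro d hd
      by_cases hc : MeetIrred c
      · exact hd ⟨hc, le_rfl⟩
      by_cases htop : c = ⊤
      · exact htop ▸ le_top
      simp only [MeetIrred, not_and, not_forall] at hc
      obtain ⟨p, q, hpq, hne⟩ := hc htop
      push_neg at hne
      have hcp : c ≤ p := hpq.1 (by simp)
      have hcq : c ≤ q := hpq.1 (by simp)
      have hdp : d ≤ p := (IH p (lt_of_le_of_ne hcp hne.1)).2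
        (fun m hm => hd ⟨hm.1, hcp.trans hm.2⟩)
      have hdq : d ≤ q := (IH q (lt_of_le_of_ne hcq hne.2)).2
        (fun m hm => hd ⟨hm.1, hcq.trans hm.2⟩)
      exact hpq.2 (by rintro s (rfl | rfl) <;> assumption)

theorem isGLB_sup_of_isGLB {L : Type*} [SemilatticeSup L] [OrderTop L] [Finite L]
    (hS : StrongUpper L) (hD : IntervalDistrib L)
    (x y w t : L) (hw : IsGLB {x, y} w) :
    IsGLB {x ⊔ t, y ⊔ t} (w ⊔ t) := by
  constructor
  · rintro s (rfl | rfl)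
    · exact sup_le_sup_right (hw.1 (by simp)) t
    · exact sup_le_sup_right (hw.1 (by simp)) t
  · intro d hd
    have hdx : d ≤ x ⊔ t := hd (by simp)
    have hdy : d ≤ y ⊔ t := hd (by simp)
    refine (isGLB_meetIrred (w ⊔ t)).2 ?_
    rintro m ⟨hm, hwt⟩
    have hwm : w ≤ m := le_sup_left.trans hwt
    have htm : t ≤ m := le_sup_right.trans hwt
    rcases meetIrred_prime hS hD hw hm hwm with h | h
    · exact hdx.trans (sup_le h htm)
    · exact hdy.trans (sup_le h htm)
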